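/- Let t = swap(i, j) be the transposition of two distinct points i, j of α. Then t commutes with, and differs from, every transposition contained in the Young-type subgroup P — that is, for every s ∈ P that is a transposition one has s·t = t·s and s ≠ t — if and only if both i and j lie in singleton fibres of f, i.e., for all k, f(k) = f(i) implies k = i, and f(k) = f(j) implies k = j. -/

import Mathlib

/-- The Young-type subgroup of `Equiv.Perm α` associated to `f : α → ι`: the permutations
preserving every fibre of `f` (the pointwise stabilizer of the fibre partition of `f`). -/
def youngSubgroup {α ι : Type*} (f : α → ι) : Subgroup (Equiv.Perm α) where
  carrier := {σ | ∀ a : α, f (σ a) = f a}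
  one_mem' := fun _ => rfl
  mul_mem' := fun {σ τ} hσ hτ a => (hσ (τ a)).trans (hτ a)
  inv_mem' := fun {σ} hσ a => by
    have h := hσ (σ⁻¹ a)
    rw [show σ (σ⁻¹ a) = a from σ.apply_symm_apply a] at h
    exact h.symm

lemma swap_mem_young {α ι : Type*} [DecidableEq α] (f : α → ι) {a b : α}
    (h : f a = f b) : Equiv.swap a b ∈ youngSubgroup f := by
  intro x
  rcases eq_or_ne x a with rfl | hxa
  · rw [Equiv.swap_apply_left]; exact h.symm
  rcases eq_or_ne x b with rfl | hxb
  · rw [Equiv.swap_apply_right]; exact h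
  · rw [Equiv.swap_apply_of_ne_of_ne hxa hxb]

/-- The transposition `swap i j` commutes with, and differs from, every transposition in
the Young subgroup `P` iff both `i` and `j` lie in singleton fibres of `f`. -/
theorem swap_perp_young_iff {α ι : Type*} [DecidableEq α] [DecidableEq ι] [Fintype α]
    (f : α → ι) (i j : α) (hij : i ≠ j) :
    (∀ s ∈ youngSubgroup f, s.IsSwap →
        s * Equiv.swap i j = Equiv.swap i j * s ∧ s ≠ Equiv.swap i j) ↔
      ((∀ k, f k = f i → k = i) ∧ (∀ k, f k = f j → k = j)) := by
  constructor
  · intro h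
    constructor
    · intro k hk
      by_contra hki
      obtain ⟨hc, hne⟩ := h (Equiv.swap i k) (swap_mem_young f hk.symm)
        ⟨i, k, Ne.symm hki, rfl⟩
      rcases eq_or_ne k j with rfl | hkj
      · exact hne rfl
      · have h2 := Equiv.ext_iff.mp hc j
        simp only [Equiv.Perm.mul_apply, Equiv.swap_apply_right,
          Equiv.swap_apply_of_ne_of_ne (Ne.symm hij) (Ne.symm hkj),
          Equiv.swap_apply_left] at h2
        exact hki h2
    · intro k hk
      by_contra hkj
      obtain ⟨hc, hne⟩ := h (Equiv.swap j k) (swap_mem_young f hk.symm)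
        ⟨j, k, Ne.symm hkj, rfl⟩
      rcases eq_or_ne k i with rfl | hki
      · exact hne (Equiv.swap_comm j k)
      · have h2 := Equiv.ext_iff.mp hc i
        simp only [Equiv.Perm.mul_apply, Equiv.swap_apply_left,
          Equiv.swap_apply_of_ne_of_ne hij (Ne.symm hki),
          Equiv.swap_apply_right] at h2
        exact hkj h2
  · rintro ⟨hi, hj⟩ s hs hsw
    obtain ⟨a, b, hab, rfl⟩ := hsw
    have hfab : f b = f a := by
      have := hs a; rwa [Equiv.swap_apply_left] at this
    have hai : a ≠ i := by rintro rfl; exact hab (hi b hfab).symm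
    have haj : a ≠ j := by rintro rfl; exact hab (hj b hfab).symm
    have hbi : b ≠ i := by rintro rfl; exact hab (hi a hfab.symm)
    have hbj : b ≠ j := by rintro rfl; exact hab (hj a hfab.symm)
    have hdisj : (Equiv.swap a b).Disjoint (Equiv.swap i j) := by
      intro x
      rcases eq_or_ne x a with rfl | hxa
      · right; exact Equiv.swap_apply_of_ne_of_ne hai haj
      rcases eq_or_ne x b with rfl | hxb
      · right; exact Equiv.swap_apply_of_ne_of_ne hbi hbj
      · left; exact Equiv.swap_apply_of_ne_of_ne hxa hxb
    refine ⟨hdisj.commute, fun heq => ?_⟩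
    have := Equiv.ext_iff.mp heq a
    rw [Equiv.swap_apply_left, Equiv.swap_apply_of_ne_of_ne hai haj] at this
    exact hab this.symm
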